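/- Suppose the candidates are ordered so that p_1/t_1 ≥ p_2/t_2 ≥ … ≥ p_N/t_N. Then for every permutation σ of {1,…,N}, the corrected expected solving time of the identity order is minimal: E'(id) ≤ E'(σ). -/

import Mathlib

open Finset

/-- Expected solving time of examining candidates `1,…,N` in the order given by the
permutation `σ` of `{1,…,N}`. -/
noncomputable def solveTime (N : ℕ) (p t : ℕ → ℝ) (σ : Equiv.Perm ℕ) : ℝ :=
  ∑ k ∈ Finset.Icc 1 N, (∑ l ∈ Finset.Icc 1 k, t (σ l)) *
    (∏ j ∈ Finset.Icc 1 (k - 1), (1 - p (σ j))) * p (σ k)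

/-- Corrected expected solving time, accounting for the possibility that all candidates fail:
`E'(σ) = E(σ) + (Σ_{l=1}^N t_l) · ∏_{j=1}^N (1 − p_j)` (the tail term does not depend on σ). -/
noncomputable def correctedSolveTime (N : ℕ) (p t : ℕ → ℝ) (σ : Equiv.Perm ℕ) : ℝ :=
  solveTime N p t σ +
    (∑ l ∈ Finset.Icc 1 N, t l) * ∏ j ∈ Finset.Icc 1 N, (1 - p j)

section Key
variable (p t : ℕ → ℝ)

noncomputable def Gfun : List ℕ → ℝ
  | [] => 0
  | a :: L => t a + (1 - p a) * Gfun L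

lemma Gfun_bubble (a : ℕ) : ∀ (A B : List ℕ),
    (∀ x ∈ A, p x ≤ 1 ∧ p x * t a ≤ p a * t x) →
    Gfun p t (a :: (A ++ B)) ≤ Gfun p t (A ++ a :: B)
  | [], B, _ => le_refl _
  | x :: A, B, h => by
      have hx := h x (List.mem_cons_self)
      have ih := Gfun_bubble a A B (fun y hy => h y (List.mem_cons_of_mem x hy))
      simp only [Gfun, List.cons_append, List.append_eq] at *
      have h3 := mul_le_mul_of_nonneg_left ih (show (0:ℝ) ≤ 1 - p x from by linarith [hx.1])
      nlinarith [hx.2, h3]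

lemma Gfun_min : ∀ (L0 L : List ℕ), L.Perm L0 →
    (∀ x ∈ L0, 0 ≤ p x ∧ p x ≤ 1 ∧ 0 ≤ t x) →
    L0.Pairwise (fun a x => p x * t a ≤ p a * t x) →
    Gfun p t L0 ≤ Gfun p t L
  | [], L, hperm, _, _ => by
      rw [List.perm_nil.mp hperm]
  | a :: T, L, hperm, hmem, hpair => by
      have haL : a ∈ L := hperm.mem_iff.mpr (List.mem_cons_self)
      obtain ⟨A, B, rfl⟩ := List.append_of_mem haL
      have hmid : (A ++ a :: B).Perm (a :: (A ++ B)) := List.perm_middle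
      have hAB : (A ++ B).Perm T := ((hmid.symm.trans hperm).cons_inv)
      have hsub : ∀ x ∈ A ++ B, x ∈ a :: T := fun x hx => hperm.mem_iff.mp
        (by rcases List.mem_append.mp hx with h | h
            · exact List.mem_append.mpr (Or.inl h)
            · exact List.mem_append.mpr (Or.inr (List.mem_cons_of_mem a h)))
      have hrel : ∀ x ∈ a :: T, p x * t a ≤ p a * t x := by
        intro x hx
        rcases List.mem_cons.mp hx with rfl | hx
        · exact le_refl _
        · exact (List.pairwise_cons.mp hpair).1 x hx
      have h1 : Gfun p t (a :: (A ++ B)) ≤ Gfun p t (A ++ a :: B) := by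
        apply Gfun_bubble
        intro x hx
        have hx' : x ∈ a :: T := hsub x (List.mem_append.mpr (Or.inl hx))
        exact ⟨(hmem x hx').2.1, hrel x hx'⟩
      have ih : Gfun p t T ≤ Gfun p t (A ++ B) :=
        Gfun_min T (A ++ B) hAB (fun x hx => hmem x (List.mem_cons_of_mem a hx))
          (List.pairwise_cons.mp hpair).2
      have ha := hmem a (List.mem_cons_self)
      have h2 : (1 - p a) * Gfun p t T ≤ (1 - p a) * Gfun p t (A ++ B) :=
        mul_le_mul_of_nonneg_left ih (by linarith [ha.2.1])
      calc Gfun p t (a :: T) = t a + (1 - p a) * Gfun p t T := rfl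
        _ ≤ t a + (1 - p a) * Gfun p t (A ++ B) := by linarith
        _ = Gfun p t (a :: (A ++ B)) := rfl
        _ ≤ Gfun p t (A ++ a :: B) := h1

lemma Gfun_eq_sum : ∀ L : List ℕ,
    Gfun p t L = ∑ i ∈ range L.length, t (L.getD i 0) * ∏ j ∈ range i, (1 - p (L.getD j 0))
  | [] => by simp [Gfun]
  | a :: L => by
      have ih := Gfun_eq_sum L
      simp only [Gfun, ih, List.length_cons]
      rw [Finset.sum_range_succ']
      simp only [List.getD_cons_succ, List.getD_cons_zero, Finset.range_zero,
        Finset.prod_empty, mul_one]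
      rw [Finset.mul_sum]
      rw [add_comm]
      congr 1
      apply Finset.sum_congr rfl
      intro i _
      rw [Finset.prod_range_succ']
      simp only [List.getD_cons_succ, List.getD_cons_zero]
      ring

/-- telescoping identity -/
lemma tele (P T : ℕ → ℝ) : ∀ N : ℕ,
    (∑ k ∈ Finset.Icc 1 N, (∑ l ∈ Finset.Icc 1 k, T l) *
        (∏ j ∈ Finset.Icc 1 (k - 1), (1 - P j)) * P k) +
      (∑ l ∈ Finset.Icc 1 N, T l) * ∏ j ∈ Finset.Icc 1 N, (1 - P j) =
    ∑ k ∈ Finset.Icc 1 N, T k * ∏ j ∈ Finset.Icc 1 (k - 1), (1 - P j)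
  | 0 => by simp
  | N + 1 => by
      have ih := tele P T N
      rw [Finset.sum_Icc_succ_top (by omega : 1 ≤ N + 1),
        Finset.sum_Icc_succ_top (by omega : 1 ≤ N + 1),
        Finset.sum_Icc_succ_top (by omega : 1 ≤ N + 1),
        Finset.prod_Icc_succ_top (by omega : 1 ≤ N + 1)]
      have hs : N + 1 - 1 = N := rfl
      rw [hs]
      linear_combination ih


lemma Icc_sum_shift (f : ℕ → ℝ) (N : ℕ) :
    ∑ k ∈ Finset.Icc 1 N, f k = ∑ i ∈ Finset.range N, f (i + 1) := by
  rw [← Finset.Ico_add_one_right_eq_Icc, Finset.sum_Ico_eq_sum_range]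
  simp [add_comm]

lemma Icc_prod_shift (f : ℕ → ℝ) (N : ℕ) :
    ∏ k ∈ Finset.Icc 1 N, f k = ∏ i ∈ Finset.range N, f (i + 1) := by
  rw [← Finset.Ico_add_one_right_eq_Icc, Finset.prod_Ico_eq_prod_range]
  simp [add_comm]

lemma corrected_eq (N : ℕ) (σ : Equiv.Perm ℕ)
    (hσ : ∀ i, i ∉ Finset.Icc 1 N → σ i = i) :
    correctedSolveTime N p t σ =
      ∑ k ∈ Finset.Icc 1 N, t (σ k) * ∏ j ∈ Finset.Icc 1 (k - 1), (1 - p (σ j)) := by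
  have hs : {a | σ a ≠ a} ⊆ (Finset.Icc 1 N : Finset ℕ) := by
    intro a ha
    by_contra h
    exact ha (hσ a h)
  have h1 : ∑ l ∈ Finset.Icc 1 N, t l = ∑ l ∈ Finset.Icc 1 N, t (σ l) :=
    (Equiv.Perm.sum_comp σ (Finset.Icc 1 N) t hs).symm
  have h2 : ∏ j ∈ Finset.Icc 1 N, (1 - p j) = ∏ j ∈ Finset.Icc 1 N, (1 - p (σ j)) :=
    (Equiv.Perm.prod_comp σ (Finset.Icc 1 N) (fun j => 1 - p j) hs).symm
  rw [correctedSolveTime, solveTime, h1, h2]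
  exact tele (fun j => p (σ j)) (fun l => t (σ l)) N

lemma corrected_eq_G (N : ℕ) (σ : Equiv.Perm ℕ)
    (hσ : ∀ i, i ∉ Finset.Icc 1 N → σ i = i) :
    correctedSolveTime N p t σ = Gfun p t ((List.range N).map (fun i => σ (i + 1))) := by
  set L : List ℕ := (List.range N).map (fun i => σ (i + 1)) with hL
  have hlen : L.length = N := by simp [hL]
  have hget : ∀ i < N, L.getD i 0 = σ (i + 1) := by
    intro i hi
    rw [List.getD_eq_getElem L 0 (by simpa [hlen] using hi)]
    simp [hL]
  rw [corrected_eq p t N σ hσ, Gfun_eq_sum, hlen, Icc_sum_shift]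
  apply Finset.sum_congr rfl
  intro i hi
  have hiN : i < N := Finset.mem_range.mp hi
  rw [hget i hiN]
  congr 1
  rw [show i + 1 - 1 = i from rfl, Icc_prod_shift]
  apply Finset.prod_congr rfl
  intro j hj
  rw [hget j (lt_trans (Finset.mem_range.mp hj) hiN)]

/-- If the candidates are ordered so that `p_1/t_1 ≥ p_2/t_2 ≥ … ≥ p_N/t_N`, then for every
permutation `σ` of `{1,…,N}` the corrected expected solving time of the identity order is
minimal. -/
theorem solomonoff_strategy_optimal_corrected
    (N : ℕ) (hN : 1 ≤ N) (p t : ℕ → ℝ)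
    (hp : ∀ i ∈ Finset.Icc 1 N, p i ∈ Set.Icc (0 : ℝ) 1)
    (ht : ∀ i ∈ Finset.Icc 1 N, 0 < t i)
    (hord : ∀ i ∈ Finset.Icc 1 (N - 1), p (i + 1) / t (i + 1) ≤ p i / t i)
    (σ : Equiv.Perm ℕ) (hσ : ∀ i, i ∉ Finset.Icc 1 N → σ i = i) :
    correctedSolveTime N p t (Equiv.refl ℕ) ≤ correctedSolveTime N p t σ := by
    have hrefl : ∀ i, i ∉ Finset.Icc 1 N → (Equiv.refl ℕ) i = i := fun i _ => rfl
    rw [corrected_eq_G p t N σ hσ, corrected_eq_G p t N (Equiv.refl ℕ) hrefl]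
    set Lid : List ℕ := (List.range N).map (fun i => (Equiv.refl ℕ) (i + 1)) with hLid
    set Lσ : List ℕ := (List.range N).map (fun i => σ (i + 1)) with hLσ
    have hmemid : ∀ x ∈ Lid, x ∈ Finset.Icc 1 N := by
      intro x hx
      simp only [hLid, List.mem_map, List.mem_range, Equiv.refl_apply] at hx
      obtain ⟨i, hi, rfl⟩ := hx
      simp only [Finset.mem_Icc]
      omega
    -- ratio order on indices
    have hratio : ∀ d i, 1 ≤ i → i + d ≤ N → p (i + d) * t i ≤ p i * t (i + d) := by
      intro d
      induction d with
      | zero => intro i _ _; simp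
      | succ d ihd =>
          intro i hi hiN
          have ih := ihd i hi (by omega)
          have hb : i + d ∈ Finset.Icc 1 N := Finset.mem_Icc.mpr ⟨by omega, by omega⟩
          have hc : i + d + 1 ∈ Finset.Icc 1 N := Finset.mem_Icc.mpr ⟨by omega, by omega⟩
          have hia : i ∈ Finset.Icc 1 N := Finset.mem_Icc.mpr ⟨hi, by omega⟩
          have hordd := hord (i + d) (Finset.mem_Icc.mpr ⟨by omega, by omega⟩)
          have htb := ht _ hb
          have htc := ht _ hc
          have hta := ht _ hia
          have h4 : p (i + d + 1) * t (i + d) ≤ p (i + d) * t (i + d + 1) := by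
            rw [div_le_div_iff₀ htc htb] at hordd
            linarith
          have h5 : p (i + d + 1) * t i * t (i + d) ≤ p i * t (i + d + 1) * t (i + d) := by
            calc p (i + d + 1) * t i * t (i + d) = (p (i + d + 1) * t (i + d)) * t i := by ring
              _ ≤ (p (i + d) * t (i + d + 1)) * t i := by
                  exact mul_le_mul_of_nonneg_right h4 (le_of_lt hta)
              _ = (p (i + d) * t i) * t (i + d + 1) := by ring
              _ ≤ (p i * t (i + d)) * t (i + d + 1) := by
                  exact mul_le_mul_of_nonneg_right ih (le_of_lt htc)
              _ = p i * t (i + d + 1) * t (i + d) := by ring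
          exact le_of_mul_le_mul_right h5 htb
    have hpairid : Lid.Pairwise (fun a x => p x * t a ≤ p a * t x) := by
      rw [hLid, List.pairwise_map]
      refine (List.pairwise_lt_range (n := N)).imp_of_mem ?_
      intro a b ha hb hab
      simp only [List.mem_range] at ha hb
      simp only [Equiv.refl_apply]
      have := hratio (b - a) (a + 1) (by omega) (by simpa using (by omega : a + 1 + (b - a) ≤ N))
      rw [show a + 1 + (b - a) = b + 1 from by omega] at this
      exact this
    -- Lσ is a permutation of Lid
    have hmaps : ∀ i ∈ Finset.Icc 1 N, σ i ∈ Finset.Icc 1 N := by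
      intro i hi
      by_contra h
      have h1 : σ (σ i) = σ i := hσ (σ i) h
      have h2 : σ i = i := σ.injective h1
      exact h (by rwa [h2])
    have himg : Finset.image (fun i => σ i) (Finset.Icc 1 N) = Finset.Icc 1 N := by
      apply Finset.eq_of_subset_of_card_le
      · intro x hx
        obtain ⟨i, hi, rfl⟩ := Finset.mem_image.mp hx
        exact hmaps i hi
      · rw [Finset.card_image_of_injective _ σ.injective]
    have hFid : Lid.toFinset = Finset.Icc 1 N := by
      ext x
      simp only [hLid, List.mem_toFinset, List.mem_map, List.mem_range, Equiv.refl_apply,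
        Finset.mem_Icc]
      constructor
      · rintro ⟨i, hi, rfl⟩; omega
      · rintro ⟨h1, h2⟩; exact ⟨x - 1, by omega, by omega⟩
    have hFσ : Lσ.toFinset = Finset.Icc 1 N := by
      ext x
      simp only [hLσ, List.mem_toFinset, List.mem_map, List.mem_range]
      constructor
      · rintro ⟨i, hi, rfl⟩
        exact hmaps (i + 1) (Finset.mem_Icc.mpr ⟨by omega, by omega⟩)
      · intro hx
        obtain ⟨i, hi, hix⟩ := Finset.mem_image.mp (himg ▸ hx)
        have hi' := Finset.mem_Icc.mp hi
        exact ⟨i - 1, by omega, by rw [show i - 1 + 1 = i from by omega]; exact hix⟩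
    have hndid : Lid.Nodup := by
      apply List.Nodup.map
      · intro a b hab
        simpa using hab
      · exact List.nodup_range
    have hndσ : Lσ.Nodup := by
      apply List.Nodup.map
      · intro a b hab
        have := σ.injective hab
        omega
      · exact List.nodup_range
    have hperm : Lσ.Perm Lid :=
      List.perm_of_nodup_nodup_toFinset_eq hndσ hndid (hFσ.trans hFid.symm)
    apply Gfun_min
    · exact hperm
    · intro x hx
      have hx' := hmemid x hx
      exact ⟨(hp x hx').1, (hp x hx').2, le_of_lt (ht x hx')⟩
    · exact hpairid

  end Key
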